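/- For a Gamma random variable X with shape α ≥ 2 and rate β > 0, P(X ≥ x) ≤ exp(−2α·h(βx/α)) for all x > α/β, where h(x) = (1/2)(x − 1 − log x). -/
import Mathlib


open MeasureTheory ProbabilityTheory Real Set

lemma chernoff_gamma (α β x : ℝ) (hα : 0 < α) (hβ : 0 < β) (hx0 : 0 < x)
    (ht : 0 < β - α / x) :
    gammaMeasure α β {y | x ≤ y} ≤
      ENNReal.ofReal (Real.exp (-(β - α/x) * x) * (β / (β - (β - α/x))) ^ α) := by
  set t := β - α / x with htdef
  have hbt : 0 < β - t := by
    have : β - t = α / x := by ring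
    rw [this]; positivity
  have hC : 0 ≤ Real.exp (-t * x) * (β / (β - t)) ^ α := by positivity
  have hmeas : MeasurableSet {y : ℝ | x ≤ y} := measurableSet_Ici
  rw [gammaMeasure, withDensity_apply _ hmeas]
  -- pointwise bound on the set
  have step1 : ∫⁻ y in {y : ℝ | x ≤ y}, gammaPDF α β y ≤
      ∫⁻ y in {y : ℝ | x ≤ y},
        ENNReal.ofReal (Real.exp (t * (y - x)) * gammaPDFReal α β y) := by
    refine setLIntegral_mono' hmeas fun y (hy : x ≤ y) ↦ ?_
    rw [gammaPDF]
    apply ENNReal.ofReal_le_ofReal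
    have h1 : 1 ≤ Real.exp (t * (y - x)) := by
      rw [← Real.exp_zero]
      exact Real.exp_le_exp.mpr (by nlinarith)
    nlinarith [gammaPDFReal_nonneg hα hβ y]
  have step2 : ∫⁻ y in {y : ℝ | x ≤ y},
        ENNReal.ofReal (Real.exp (t * (y - x)) * gammaPDFReal α β y) ≤
      ∫⁻ y, ENNReal.ofReal (Real.exp (t * (y - x)) * gammaPDFReal α β y) :=
    setLIntegral_le_lintegral _ _
  -- rewrite integrand as constant * gammaPDFReal α (β - t)
  have key : ∀ y : ℝ, Real.exp (t * (y - x)) * gammaPDFReal α β y =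
      (Real.exp (-t * x) * (β / (β - t)) ^ α) * gammaPDFReal α (β - t) y := by
    intro y
    unfold gammaPDFReal
    by_cases hy : 0 ≤ y
    · rw [if_pos hy, if_pos hy]
      have hβα : β ^ α = (β / (β - t)) ^ α * (β - t) ^ α := by
        rw [← Real.mul_rpow (by positivity) hbt.le, div_mul_cancel₀ _ hbt.ne']
      rw [hβα]
      rw [show t * (y - x) = -t * x + t * y by ring, Real.exp_add]
      rw [show -((β - t) * y) = -(β * y) + t * y by ring, Real.exp_add]
      ring
    · rw [if_neg hy, if_neg hy]; ring
  have step3 : ∫⁻ y, ENNReal.ofReal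
        ((Real.exp (-t * x) * (β / (β - t)) ^ α) * gammaPDFReal α (β - t) y)
      = ENNReal.ofReal (Real.exp (-t * x) * (β / (β - t)) ^ α) := by
    simp_rw [ENNReal.ofReal_mul hC]
    rw [lintegral_const_mul]
    · rw [show (fun y ↦ ENNReal.ofReal (gammaPDFReal α (β - t) y)) = gammaPDF α (β - t) from rfl,
        lintegral_gammaPDF_eq_one hα hbt, mul_one]
    · exact ENNReal.measurable_ofReal.comp (measurable_gammaPDFReal α (β - t))
  calc ∫⁻ y in {y : ℝ | x ≤ y}, gammaPDF α β y
      ≤ ∫⁻ y in {y : ℝ | x ≤ y},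
          ENNReal.ofReal ((Real.exp (-t * x) * (β / (β - t)) ^ α) * gammaPDFReal α (β - t) y) := by
        simp_rw [← key]; exact step1
    _ ≤ ∫⁻ y, ENNReal.ofReal
          ((Real.exp (-t * x) * (β / (β - t)) ^ α) * gammaPDFReal α (β - t) y) :=
        setLIntegral_le_lintegral _ _
    _ = _ := step3

/-- Gamma tail bound: for `X ~ Gamma(α, β)` with shape `α ≥ 2` and rate `β > 0`,
`P(X ≥ x) ≤ exp(-2α h(βx/α))` for `x > α/β`, where `h(x) = (1/2)(x - 1 - log x)`. -/
theorem gamma_tail_bound (α β x : ℝ) (hα : 2 ≤ α) (hβ : 0 < β) (hx : α / β < x) :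
    gammaMeasure α β {y | x ≤ y} ≤
      ENNReal.ofReal (Real.exp (-2 * α * ((1 / 2) * (β * x / α - 1 - Real.log (β * x / α))))) := by
  have hα0 : 0 < α := by linarith
  have hx0 : 0 < x := lt_trans (by positivity) hx
  have ht : 0 < β - α / x := by
    rw [sub_pos, div_lt_iff₀ hx0]
    calc α = (α / β) * β := by field_simp
    _ < β * x := by rw [mul_comm β x]; exact mul_lt_mul_of_pos_right hx hβ
  have h := chernoff_gamma α β x hα0 hβ hx0 ht
  refine h.trans_eq ?_
  congr 1
  have h1 : β - (β - α / x) = α / x := by ring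
  have h2 : β / (α / x) = β * x / α := by field_simp
  have hpos : 0 < β * x / α := by positivity
  rw [h1, h2, Real.rpow_def_of_pos hpos, ← Real.exp_add]
  congr 1
  have hx' : x ≠ 0 := hx0.ne'
  field_simp
  ring
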